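/- Let y⁽¹⁾,…,y⁽ᵐ⁾ : Ω → ℝ^{d_z} be independent, square-integrable random vectors, each with covariance matrix Σ̂ (Cov(y⁽ⁱ⁾_j, y⁽ⁱ⁾_k) = Σ̂_{jk} for all i, j, k). With H_eq invertible, define θ_eq* = H_eq⁻¹ d_eq(y). Then for all a, b ∈ ℝ^{d_x}, Cov(aᵀθ_eq*, bᵀθ_eq*) = aᵀ H_eq⁻¹ M_eq H_eq⁻¹ b, where M_eq = (1/(δ²m²)) Σ_{i=1}^m diag(x⁽ⁱ⁾) Pᵀ F (FᵀV̂⁽ⁱ⁾F)⁻¹ Fᵀ Σ̂ F (FᵀV̂⁽ⁱ⁾F)⁻¹ Fᵀ P diag(x⁽ⁱ⁾). -/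

import Mathlib

open Matrix MeasureTheory ProbabilityTheory

/-- Equality-constrained IPO portfolio
`z*(θ, i) = (1/δ) F (FᵀV̂⁽ⁱ⁾F)⁻¹ Fᵀ P diag(x⁽ⁱ⁾) θ + (I − F (FᵀV̂⁽ⁱ⁾F)⁻¹ Fᵀ V̂⁽ⁱ⁾) z₀`. -/
noncomputable def eqZ {m dx dz dn : ℕ} (δ : ℝ) (x : Fin m → Fin dx → ℝ)
    (P : Matrix (Fin dz) (Fin dx) ℝ) (Vh : Fin m → Matrix (Fin dz) (Fin dz) ℝ)
    (F : Matrix (Fin dz) (Fin dn) ℝ) (z₀ : Fin dz → ℝ)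
    (i : Fin m) (θ : Fin dx → ℝ) : Fin dz → ℝ :=
  (1 / δ) • ((F * (Fᵀ * Vh i * F)⁻¹ * Fᵀ * P * diagonal (x i)) *ᵥ θ) +
    (1 - F * (Fᵀ * Vh i * F)⁻¹ * Fᵀ * Vh i) *ᵥ z₀

/-- Equality-constrained IPO Hessian
`H_eq = (1/(mδ)) Σᵢ diag(x⁽ⁱ⁾) Pᵀ F (FᵀV̂⁽ⁱ⁾F)⁻¹ Fᵀ V⁽ⁱ⁾ F (FᵀV̂⁽ⁱ⁾F)⁻¹ Fᵀ P diag(x⁽ⁱ⁾)`. -/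
noncomputable def eqH {m dx dz dn : ℕ} (δ : ℝ) (x : Fin m → Fin dx → ℝ)
    (P : Matrix (Fin dz) (Fin dx) ℝ) (Vh V : Fin m → Matrix (Fin dz) (Fin dz) ℝ)
    (F : Matrix (Fin dz) (Fin dn) ℝ) : Matrix (Fin dx) (Fin dx) ℝ :=
  (1 / ((m : ℝ) * δ)) •
    ∑ i, diagonal (x i) * Pᵀ * F * (Fᵀ * Vh i * F)⁻¹ * Fᵀ * V i * F *
      (Fᵀ * Vh i * F)⁻¹ * Fᵀ * P * diagonal (x i)

/-- Equality-constrained IPO linear term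
`d_eq = (1/(mδ)) Σᵢ diag(x⁽ⁱ⁾) Pᵀ F (FᵀV̂⁽ⁱ⁾F)⁻¹ Fᵀ (y⁽ⁱ⁾ − V⁽ⁱ⁾ (I − F (FᵀV̂⁽ⁱ⁾F)⁻¹ Fᵀ V̂⁽ⁱ⁾) z₀)`. -/
noncomputable def eqD {m dx dz dn : ℕ} (δ : ℝ) (x : Fin m → Fin dx → ℝ)
    (P : Matrix (Fin dz) (Fin dx) ℝ) (Vh V : Fin m → Matrix (Fin dz) (Fin dz) ℝ)
    (F : Matrix (Fin dz) (Fin dn) ℝ) (z₀ : Fin dz → ℝ)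
    (y : Fin m → Fin dz → ℝ) : Fin dx → ℝ :=
  (1 / ((m : ℝ) * δ)) •
    ∑ i, (diagonal (x i) * Pᵀ * F * (Fᵀ * Vh i * F)⁻¹ * Fᵀ) *ᵥ
      (y i - (V i * (1 - F * (Fᵀ * Vh i * F)⁻¹ * Fᵀ * Vh i)) *ᵥ z₀)

/-- Covariance of two real-valued random variables:
`Cov(X, Y) = E[(X − E X)(Y − E Y)]`. -/
noncomputable def rvCov {Ω : Type} [MeasurableSpace Ω] (μ : Measure Ω)
    (X Y : Ω → ℝ) : ℝ :=
  ∫ ω, (X ω - ∫ ω', X ω' ∂μ) * (Y ω - ∫ ω', Y ω' ∂μ) ∂μ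

/-- The matrix
`M_eq = (1/(δ²m²)) Σᵢ diag(x⁽ⁱ⁾) Pᵀ F (FᵀV̂⁽ⁱ⁾F)⁻¹ Fᵀ Σ̂ F (FᵀV̂⁽ⁱ⁾F)⁻¹ Fᵀ P diag(x⁽ⁱ⁾)`. -/
noncomputable def eqM {m dx dz dn : ℕ} (δ : ℝ) (x : Fin m → Fin dx → ℝ)
    (P : Matrix (Fin dz) (Fin dx) ℝ) (Vh : Fin m → Matrix (Fin dz) (Fin dz) ℝ)
    (F : Matrix (Fin dz) (Fin dn) ℝ) (Sighat : Matrix (Fin dz) (Fin dz) ℝ) :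
    Matrix (Fin dx) (Fin dx) ℝ :=
  (1 / (δ ^ 2 * (m : ℝ) ^ 2)) •
    ∑ i, diagonal (x i) * Pᵀ * F * (Fᵀ * Vh i * F)⁻¹ * Fᵀ * Sighat * F *
      (Fᵀ * Vh i * F)⁻¹ * Fᵀ * P * diagonal (x i)


/-! ### Auxiliary lemmas -/

section Aux

open Finset

lemma dotProduct_sum' {n ι : Type*} [Fintype n] [Fintype ι] (u : n → ℝ) (t : ι → n → ℝ) :
    u ⬝ᵥ (∑ i, t i) = ∑ i, u ⬝ᵥ t i := by
  simp only [dotProduct, Finset.sum_apply, Finset.mul_sum]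
  exact Finset.sum_comm

lemma sum_mulVec' {k n ι : Type*} [Fintype n] [Fintype ι] (M : ι → Matrix k n ℝ)
    (t : n → ℝ) : (∑ i, M i) *ᵥ t = ∑ i, M i *ᵥ t := by
  funext j
  rw [Finset.sum_apply]
  show (∑ i, M i) j ⬝ᵥ t = ∑ i, (M i) j ⬝ᵥ t
  simp only [Matrix.sum_apply, dotProduct, Finset.sum_mul]
  exact Finset.sum_comm

lemma mulVec_sum' {k n ι : Type*} [Fintype n] [Fintype ι] (M : Matrix k n ℝ)
    (t : ι → n → ℝ) : M *ᵥ (∑ i, t i) = ∑ i, M *ᵥ t i :=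
  map_sum M.mulVecLin t Finset.univ

lemma dot_trans {k n : Type*} [Fintype k] [Fintype n] (M : Matrix k n ℝ) (u : k → ℝ)
    (t : n → ℝ) : (Mᵀ *ᵥ u) ⬝ᵥ t = u ⬝ᵥ (M *ᵥ t) := by
  rw [Matrix.mulVec_transpose, ← Matrix.dotProduct_mulVec]

lemma gen_dot {m dx dz : ℕ} (c : ℝ) (B : Fin m → Matrix (Fin dx) (Fin dz) ℝ)
    (s : Fin m → Fin dz → ℝ) (Q : Matrix (Fin dx) (Fin dx) ℝ) (u : Fin dx → ℝ) :
    u ⬝ᵥ (Q *ᵥ (c • ∑ i, B i *ᵥ s i)) = ∑ i, c * (((Q * B i)ᵀ *ᵥ u) ⬝ᵥ s i) := by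
  rw [Matrix.mulVec_smul, dotProduct_smul, mulVec_sum', dotProduct_sum',
    smul_eq_mul, Finset.mul_sum]
  simp only [Matrix.mulVec_mulVec]
  simp only [← dot_trans]

variable {Ω : Type} [MeasurableSpace Ω] {μ : Measure Ω} [IsProbabilityMeasure μ]

lemma memL2_mul_integrable {f g : Ω → ℝ} (hf : MemLp f 2 μ) (hg : MemLp g 2 μ) :
    Integrable (fun ω => f ω * g ω) μ := by
  have h1 := (hf.add hg).integrable_sq
  have h2 := hf.integrable_sq
  have h3 := hg.integrable_sq
  have : (fun ω => f ω * g ω) = fun ω => (((f + g) ω)^2 - f ω^2 - g ω^2)/2 := by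
    funext ω; simp [Pi.add_apply]; ring
  rw [this]
  exact ((h1.sub h2).sub h3).div_const 2

lemma rvCov_indep' {X Y : Ω → ℝ} (h : IndepFun X Y μ)
    (hX : Integrable X μ) (hY : Integrable Y μ) : rvCov μ X Y = 0 := by
  unfold rvCov
  set cX := ∫ ω', X ω' ∂μ
  set cY := ∫ ω', Y ω' ∂μ
  have h2 : IndepFun (fun ω => X ω - cX) (fun ω => Y ω - cY) μ :=
    h.comp (measurable_sub_const cX) (measurable_sub_const cY)
  have hXm : AEStronglyMeasurable (fun ω => X ω - cX) μ :=
    (hX.sub (integrable_const cX)).aestronglyMeasurable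
  have hYm : AEStronglyMeasurable (fun ω => Y ω - cY) μ :=
    (hY.sub (integrable_const cY)).aestronglyMeasurable
  have hmul := h2.integral_mul_eq_mul_integral hXm hYm
  rw [show (fun ω => (X ω - cX) * (Y ω - cY))
      = ((fun ω => X ω - cX) * fun ω => Y ω - cY) from rfl, hmul]
  have : ∫ ω, (X ω - cX) ∂μ = 0 := by
    rw [integral_sub hX (integrable_const cX), integral_const]
    simp [cX]
  rw [this, zero_mul]

lemma rvCov_sum' {ι κ : Type*} [Fintype ι] [Fintype κ]
    (X : ι → Ω → ℝ) (Y : κ → Ω → ℝ)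
    (hX : ∀ i, MemLp (X i) 2 μ) (hY : ∀ j, MemLp (Y j) 2 μ) :
    rvCov μ (fun ω => ∑ i, X i ω) (fun ω => ∑ j, Y j ω)
      = ∑ i, ∑ j, rvCov μ (X i) (Y j) := by
  unfold rvCov
  have hXi : ∀ i, Integrable (X i) μ := fun i => (hX i).integrable one_le_two
  have hYj : ∀ j, Integrable (Y j) μ := fun j => (hY j).integrable one_le_two
  have hEX : ∫ ω', (∑ i, X i ω') ∂μ = ∑ i, ∫ ω', X i ω' ∂μ :=
    integral_finset_sum _ (fun i _ => hXi i)
  have hEY : ∫ ω', (∑ j, Y j ω') ∂μ = ∑ j, ∫ ω', Y j ω' ∂μ :=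
    integral_finset_sum _ (fun j _ => hYj j)
  rw [hEX, hEY]
  have key : ∀ ω, (∑ i, X i ω - ∑ i, ∫ ω', X i ω' ∂μ) * (∑ j, Y j ω - ∑ j, ∫ ω', Y j ω' ∂μ)
      = ∑ i, ∑ j, (X i ω - ∫ ω', X i ω' ∂μ) * (Y j ω - ∫ ω', Y j ω' ∂μ) := by
    intro ω
    rw [← Finset.sum_sub_distrib, ← Finset.sum_sub_distrib, Finset.sum_mul_sum]
  simp only [key]
  rw [integral_finset_sum]
  · refine Finset.sum_congr rfl (fun i _ => ?_)
    rw [integral_finset_sum]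
    intro j _
    exact memL2_mul_integrable ((hX i).sub (memLp_const _)) ((hY j).sub (memLp_const _))
  · intro i _
    apply integrable_finset_sum
    intro j _
    exact memL2_mul_integrable ((hX i).sub (memLp_const _)) ((hY j).sub (memLp_const _))

lemma rvCov_const_mul' (c d : ℝ) (X Y : Ω → ℝ) :
    rvCov μ (fun ω => c * X ω) (fun ω => d * Y ω) = c * d * rvCov μ X Y := by
  unfold rvCov
  beta_reduce
  rw [show (∫ a, c * X a ∂μ) = c * ∫ a, X a ∂μ from integral_const_mul c X,
    show (∫ a, d * Y a ∂μ) = d * ∫ a, Y a ∂μ from integral_const_mul d Y]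
  rw [show (fun ω => (c * X ω - c * ∫ a, X a ∂μ) * (d * Y ω - d * ∫ a, Y a ∂μ))
      = fun ω => (c * d) * ((X ω - ∫ a, X a ∂μ) * (Y ω - ∫ a, Y a ∂μ)) from by
        funext ω; ring]
  exact integral_const_mul _ _

lemma rvCov_add_const' (X Y : Ω → ℝ) (cx cy : ℝ)
    (hX : Integrable X μ) (hY : Integrable Y μ) :
    rvCov μ (fun ω => X ω + cx) (fun ω => Y ω + cy) = rvCov μ X Y := by
  unfold rvCov
  rw [integral_add hX (integrable_const cx), integral_add hY (integrable_const cy),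
    integral_const]
  simp

end Aux

lemma eqD_dot {m dx dz dn : ℕ} (δ : ℝ) (x : Fin m → Fin dx → ℝ)
    (P : Matrix (Fin dz) (Fin dx) ℝ) (Vh V : Fin m → Matrix (Fin dz) (Fin dz) ℝ)
    (F : Matrix (Fin dz) (Fin dn) ℝ) (z₀ : Fin dz → ℝ)
    (Q : Matrix (Fin dx) (Fin dx) ℝ) (u : Fin dx → ℝ) (w : Fin m → Fin dz → ℝ) :
    u ⬝ᵥ (Q *ᵥ eqD δ x P Vh V F z₀ w)
      = (∑ i, (1 / ((m : ℝ) * δ)) *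
          (((Q * (diagonal (x i) * Pᵀ * F * (Fᵀ * Vh i * F)⁻¹ * Fᵀ))ᵀ *ᵥ u) ⬝ᵥ w i))
        + (-∑ i, (1 / ((m : ℝ) * δ)) *
          (((Q * (diagonal (x i) * Pᵀ * F * (Fᵀ * Vh i * F)⁻¹ * Fᵀ))ᵀ *ᵥ u) ⬝ᵥ
            ((V i * (1 - F * (Fᵀ * Vh i * F)⁻¹ * Fᵀ * Vh i)) *ᵥ z₀))) := by
  unfold eqD
  rw [gen_dot]
  calc ∑ i, (1 / ((m : ℝ) * δ)) *
        (((Q * (diagonal (x i) * Pᵀ * F * (Fᵀ * Vh i * F)⁻¹ * Fᵀ))ᵀ *ᵥ u) ⬝ᵥ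
          (w i - (V i * (1 - F * (Fᵀ * Vh i * F)⁻¹ * Fᵀ * Vh i)) *ᵥ z₀))
      = ∑ i, ((1 / ((m : ℝ) * δ)) *
          (((Q * (diagonal (x i) * Pᵀ * F * (Fᵀ * Vh i * F)⁻¹ * Fᵀ))ᵀ *ᵥ u) ⬝ᵥ w i)
        - (1 / ((m : ℝ) * δ)) *
          (((Q * (diagonal (x i) * Pᵀ * F * (Fᵀ * Vh i * F)⁻¹ * Fᵀ))ᵀ *ᵥ u) ⬝ᵥ
            ((V i * (1 - F * (Fᵀ * Vh i * F)⁻¹ * Fᵀ * Vh i)) *ᵥ z₀))) := by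
        refine Finset.sum_congr rfl fun i _ => ?_
        rw [dotProduct_sub, mul_sub]
    _ = _ := by rw [Finset.sum_sub_distrib, sub_eq_add_neg]

lemma eqH_symm {m dx dz dn : ℕ} (δ : ℝ) (x : Fin m → Fin dx → ℝ)
    (P : Matrix (Fin dz) (Fin dx) ℝ) (Vh V : Fin m → Matrix (Fin dz) (Fin dz) ℝ)
    (hVh : ∀ i, (Vh i).PosDef) (hV : ∀ i, (V i).PosDef)
    (F : Matrix (Fin dz) (Fin dn) ℝ) :
    (eqH δ x P Vh V F)ᵀ = eqH δ x P Vh V F := by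
  unfold eqH
  rw [Matrix.transpose_smul]
  congr 1
  rw [Matrix.transpose_sum]
  refine Finset.sum_congr rfl fun i _ => ?_
  have hVhs : (Vh i)ᵀ = Vh i := by
    have h : (Vh i)ᴴ = Vh i := (hVh i).1
    rwa [Matrix.conjTranspose_eq_transpose_of_trivial] at h
  have hVs : (V i)ᵀ = V i := by
    have h : (V i)ᴴ = V i := (hV i).1
    rwa [Matrix.conjTranspose_eq_transpose_of_trivial] at h
  have hB : ((Fᵀ * Vh i * F)⁻¹)ᵀ = (Fᵀ * Vh i * F)⁻¹ := by
    rw [Matrix.transpose_nonsing_inv]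
    congr 1
    simp [Matrix.transpose_mul, Matrix.transpose_transpose, hVhs, Matrix.mul_assoc]
  simp only [Matrix.transpose_mul, Matrix.transpose_transpose, Matrix.diagonal_transpose,
    hB, hVs]
  simp only [Matrix.mul_assoc]

/-- For independent square-integrable `y⁽ⁱ⁾` with common covariance `Σ̂`, the
equality-constrained IPO estimator `θ_eq* = H_eq⁻¹ d_eq(y)` satisfies
`Cov(aᵀθ_eq*, bᵀθ_eq*) = aᵀ H_eq⁻¹ M_eq H_eq⁻¹ b`. -/
theorem stmt_16 {m dx dz dn : ℕ} (hm : 0 < m) (δ : ℝ) (hδ : 0 < δ)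
    (x : Fin m → Fin dx → ℝ) (P : Matrix (Fin dz) (Fin dx) ℝ)
    (Vh V : Fin m → Matrix (Fin dz) (Fin dz) ℝ)
    (hVh : ∀ i, (Vh i).PosDef) (hV : ∀ i, (V i).PosDef)
    (F : Matrix (Fin dz) (Fin dn) ℝ) (hFinj : Function.Injective F.mulVec)
    (z₀ : Fin dz → ℝ)
    {Ω : Type} [MeasurableSpace Ω] (μ : Measure Ω) [IsProbabilityMeasure μ]
    (y : Fin m → Ω → Fin dz → ℝ)
    (hindep : ∀ i j, i ≠ j → IndepFun (y i) (y j) μ)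
    (hL2 : ∀ i j, MemLp (fun ω => y i ω j) 2 μ)
    (Sighat : Matrix (Fin dz) (Fin dz) ℝ)
    (hcov : ∀ i j k, rvCov μ (fun ω => y i ω j) (fun ω => y i ω k) = Sighat j k)
    (hH : IsUnit (eqH δ x P Vh V F).det) :
    ∀ a b : Fin dx → ℝ,
      rvCov μ
        (fun ω => a ⬝ᵥ ((eqH δ x P Vh V F)⁻¹ *ᵥ eqD δ x P Vh V F z₀ (fun i => y i ω)))
        (fun ω => b ⬝ᵥ ((eqH δ x P Vh V F)⁻¹ *ᵥ eqD δ x P Vh V F z₀ (fun i => y i ω))) =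
      a ⬝ᵥ (((eqH δ x P Vh V F)⁻¹ * eqM δ x P Vh F Sighat * (eqH δ x P Vh V F)⁻¹) *ᵥ b) := by
  intro a b
  classical
  set Q : Matrix (Fin dx) (Fin dx) ℝ := (eqH δ x P Vh V F)⁻¹ with hQ
  have hQsym : Qᵀ = Q := by
    rw [hQ, Matrix.transpose_nonsing_inv, eqH_symm δ x P Vh V hVh hV F]
  have hB : ∀ i, ((Fᵀ * Vh i * F)⁻¹)ᵀ = (Fᵀ * Vh i * F)⁻¹ := by
    intro i
    have hVhs : (Vh i)ᵀ = Vh i := by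
      have h : (Vh i)ᴴ = Vh i := (hVh i).1
      rwa [Matrix.conjTranspose_eq_transpose_of_trivial] at h
    rw [Matrix.transpose_nonsing_inv]
    congr 1
    simp [Matrix.transpose_mul, Matrix.transpose_transpose, hVhs, Matrix.mul_assoc]
  set c : ℝ := 1 / ((m : ℝ) * δ) with hc
  set A : Fin m → Matrix (Fin dx) (Fin dz) ℝ :=
    fun i => Q * (diagonal (x i) * Pᵀ * F * (Fᵀ * Vh i * F)⁻¹ * Fᵀ) with hA
  set g : Fin m → Fin dz → ℝ := fun i => (A i)ᵀ *ᵥ a with hg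
  set g' : Fin m → Fin dz → ℝ := fun i => (A i)ᵀ *ᵥ b with hg'
  set v : Fin m → Fin dz → ℝ :=
    fun i => (V i * (1 - F * (Fᵀ * Vh i * F)⁻¹ * Fᵀ * Vh i)) *ᵥ z₀ with hv
  have hfa : (fun ω => a ⬝ᵥ (Q *ᵥ eqD δ x P Vh V F z₀ (fun i => y i ω)))
      = fun ω => (∑ i, c * (g i ⬝ᵥ y i ω)) + (-∑ i, c * (g i ⬝ᵥ v i)) := by
    funext ω
    exact eqD_dot δ x P Vh V F z₀ Q a (fun i => y i ω)
  have hfb : (fun ω => b ⬝ᵥ (Q *ᵥ eqD δ x P Vh V F z₀ (fun i => y i ω)))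
      = fun ω => (∑ i, c * (g' i ⬝ᵥ y i ω)) + (-∑ i, c * (g' i ⬝ᵥ v i)) := by
    funext ω
    exact eqD_dot δ x P Vh V F z₀ Q b (fun i => y i ω)
  rw [hfa, hfb]
  -- integrability facts
  have hdotL2 : ∀ (u : Fin dz → ℝ) (i : Fin m), MemLp (fun ω => u ⬝ᵥ y i ω) 2 μ := by
    intro u i
    have : (fun ω => u ⬝ᵥ y i ω) = fun ω => ∑ j, u j * y i ω j := rfl
    rw [this]
    exact memLp_finsetSum _ (fun j _ => (hL2 i j).const_mul (u j))
  have hXL2 : ∀ i, MemLp (fun ω => c * (g i ⬝ᵥ y i ω)) 2 μ :=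
    fun i => (hdotL2 (g i) i).const_mul c
  have hYL2 : ∀ i, MemLp (fun ω => c * (g' i ⬝ᵥ y i ω)) 2 μ :=
    fun i => (hdotL2 (g' i) i).const_mul c
  have hXint : Integrable (fun ω => ∑ i, c * (g i ⬝ᵥ y i ω)) μ :=
    integrable_finset_sum _ (fun i _ => (hXL2 i).integrable one_le_two)
  have hYint : Integrable (fun ω => ∑ i, c * (g' i ⬝ᵥ y i ω)) μ :=
    integrable_finset_sum _ (fun i _ => (hYL2 i).integrable one_le_two)
  have mdot : ∀ (u : Fin dz → ℝ), Measurable (fun vv : Fin dz → ℝ => c * (u ⬝ᵥ vv)) := by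
    intro u
    apply Measurable.const_mul
    show Measurable fun vv : Fin dz → ℝ => ∑ j, u j * vv j
    exact Finset.measurable_sum _ (fun j _ => by fun_prop)
  calc rvCov μ (fun ω => (∑ i, c * (g i ⬝ᵥ y i ω)) + (-∑ i, c * (g i ⬝ᵥ v i)))
        (fun ω => (∑ i, c * (g' i ⬝ᵥ y i ω)) + (-∑ i, c * (g' i ⬝ᵥ v i)))
      = rvCov μ (fun ω => ∑ i, c * (g i ⬝ᵥ y i ω)) (fun ω => ∑ i, c * (g' i ⬝ᵥ y i ω)) :=
        rvCov_add_const' _ _ _ _ hXint hYint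
    _ = ∑ i, ∑ k, rvCov μ (fun ω => c * (g i ⬝ᵥ y i ω)) (fun ω => c * (g' k ⬝ᵥ y k ω)) :=
        rvCov_sum' _ _ hXL2 hYL2
    _ = ∑ i, c * c * (g i ⬝ᵥ (Sighat *ᵥ g' i)) := by
        refine Finset.sum_congr rfl fun i _ => ?_
        rw [Finset.sum_eq_single i]
        · -- diagonal term
          have h1 : rvCov μ (fun ω => c * (g i ⬝ᵥ y i ω)) (fun ω => c * (g' i ⬝ᵥ y i ω))
              = c * c * rvCov μ (fun ω => g i ⬝ᵥ y i ω) (fun ω => g' i ⬝ᵥ y i ω) :=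
            rvCov_const_mul' c c _ _
          rw [h1]
          congr 1
          have h2 : rvCov μ (fun ω => g i ⬝ᵥ y i ω) (fun ω => g' i ⬝ᵥ y i ω)
              = ∑ j, ∑ l, rvCov μ (fun ω => g i j * y i ω j) (fun ω => g' i l * y i ω l) :=
            rvCov_sum' (fun j ω => g i j * y i ω j) (fun l ω => g' i l * y i ω l)
              (fun j => (hL2 i j).const_mul _) (fun l => (hL2 i l).const_mul _)
          rw [h2]
          have h3 : ∀ j l : Fin dz,
              rvCov μ (fun ω => g i j * y i ω j) (fun ω => g' i l * y i ω l)
                = g i j * g' i l * Sighat j l := by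
            intro j l
            exact (rvCov_const_mul' (g i j) (g' i l) _ _).trans (by rw [hcov i j l])
          simp only [h3]
          simp only [dotProduct, Matrix.mulVec, Finset.mul_sum]
          exact Finset.sum_congr rfl fun j _ => Finset.sum_congr rfl fun l _ => by ring
        · intro k _ hki
          have hik : i ≠ k := fun h => hki h.symm
          have hindcomp : IndepFun (fun ω => c * (g i ⬝ᵥ y i ω))
              (fun ω => c * (g' k ⬝ᵥ y k ω)) μ := by
            have := (hindep i k hik).comp (mdot (g i)) (mdot (g' k))
            exact this
          exact rvCov_indep' hindcomp ((hXL2 i).integrable one_le_two)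
            ((hYL2 k).integrable one_le_two)
        · intro hnot
          exact absurd (Finset.mem_univ i) hnot
    _ = a ⬝ᵥ ((Q * eqM δ x P Vh F Sighat * Q) *ᵥ b) := by
        have hper : ∀ i : Fin m, g i ⬝ᵥ (Sighat *ᵥ g' i)
            = a ⬝ᵥ ((Q * (diagonal (x i) * Pᵀ * F * (Fᵀ * Vh i * F)⁻¹ * Fᵀ * Sighat * F *
                (Fᵀ * Vh i * F)⁻¹ * Fᵀ * P * diagonal (x i)) * Q) *ᵥ b) := by
          intro i
          rw [hg, hg']
          rw [Matrix.mulVec_mulVec, dot_trans, Matrix.mulVec_mulVec]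
          congr 1
          rw [hA]
          simp only [Matrix.transpose_mul, Matrix.transpose_transpose,
            Matrix.diagonal_transpose, hB i, hQsym]
          simp only [Matrix.mul_assoc]
        have hrhs : a ⬝ᵥ ((Q * eqM δ x P Vh F Sighat * Q) *ᵥ b)
            = ∑ i, (1 / (δ ^ 2 * (m : ℝ) ^ 2)) *
              (a ⬝ᵥ ((Q * (diagonal (x i) * Pᵀ * F * (Fᵀ * Vh i * F)⁻¹ * Fᵀ * Sighat * F *
                (Fᵀ * Vh i * F)⁻¹ * Fᵀ * P * diagonal (x i)) * Q) *ᵥ b)) := by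
          unfold eqM
          rw [Matrix.mul_smul, Matrix.smul_mul, Matrix.smul_mulVec,
            dotProduct_smul, smul_eq_mul, Finset.mul_sum, Finset.sum_mul,
            sum_mulVec', dotProduct_sum', Finset.mul_sum]
        rw [hrhs]
        refine Finset.sum_congr rfl fun i _ => ?_
        rw [hper i, hc]
        have : (1:ℝ) / ((m : ℝ) * δ) * (1 / ((m : ℝ) * δ)) = 1 / (δ ^ 2 * (m : ℝ) ^ 2) := by
          ring
        rw [this]
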